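/- Let m ≥ 2, let B be a real m×m matrix with Bᵀ = −B and B² = −I, and for x = (x_h,x_v) ∈ ℝᵐ × ℝ let σ(x) = [I_m ; (Bx_h)ᵀ] and U(x) = (|x_h|⁴ + 4x_v²)^{1/4}. Define G(x) = |σ(x)ᵀ∇U(x)|². Then U is a classical solution on ℝ^{m+1}∖{0} of the Aronsson equation for the Hamiltonian H²(x,p) = |σ(x)ᵀp|²: for every x ≠ 0, ∇G(x) · (2σ(x)σ(x)ᵀ∇U(x)) = 0, where 2σ(x)σ(x)ᵀ∇U(x) = (H²)_p(x,∇U(x)). -/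

import Mathlib

open Set
open scoped RealInnerProductSpace

/-- The horizontal part of the gradient of `U : ℝᵐ × ℝ → ℝ`. -/
noncomputable def gradH {m : ℕ} (U : EuclideanSpace ℝ (Fin m) × ℝ → ℝ)
    (x : EuclideanSpace ℝ (Fin m) × ℝ) : EuclideanSpace ℝ (Fin m) :=
  (EuclideanSpace.equiv (Fin m) ℝ).symm
    (fun i => fderiv ℝ U x (EuclideanSpace.single i 1, 0))

/-- The vertical part of the gradient of `U : ℝᵐ × ℝ → ℝ`. -/
noncomputable def gradV {m : ℕ} (U : EuclideanSpace ℝ (Fin m) × ℝ → ℝ)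
    (x : EuclideanSpace ℝ (Fin m) × ℝ) : ℝ :=
  fderiv ℝ U x (0, 1)

noncomputable section Aux11

variable {m : ℕ}

/-- Abbreviation for the squared-gauge base function. -/
def phi11 (z : EuclideanSpace ℝ (Fin m) × ℝ) : ℝ := ‖z.1‖ ^ 4 + 4 * z.2 ^ 2

/-- The derivative of `phi11` at `y`. -/
def Dphi11 (y : EuclideanSpace ℝ (Fin m) × ℝ) :
    EuclideanSpace ℝ (Fin m) × ℝ →L[ℝ] ℝ :=
  (4 * ‖y.1‖ ^ 2) • ((innerSL ℝ y.1).comp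
      (ContinuousLinearMap.fst ℝ (EuclideanSpace ℝ (Fin m)) ℝ))
    + (8 * y.2) • ContinuousLinearMap.snd ℝ (EuclideanSpace ℝ (Fin m)) ℝ

lemma Dphi11_apply (y : EuclideanSpace ℝ (Fin m) × ℝ)
    (w : EuclideanSpace ℝ (Fin m) × ℝ) :
    Dphi11 y w = 4 * ‖y.1‖ ^ 2 * ⟪y.1, w.1⟫ + 8 * y.2 * w.2 := by
  simp [Dphi11, mul_assoc]

lemma phi11_pos {y : EuclideanSpace ℝ (Fin m) × ℝ} (hy : y ≠ 0) : 0 < phi11 y := by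
  rcases eq_or_ne y.1 0 with h1 | h1
  · have h2 : y.2 ≠ 0 := by
      intro h2; exact hy (Prod.ext h1 h2)
    have : 0 < 4 * y.2 ^ 2 := by
      have := lt_of_le_of_ne (sq_nonneg y.2) (Ne.symm (pow_ne_zero 2 h2))
      linarith
    have : (0:ℝ) ≤ ‖y.1‖ ^ 4 := by positivity
    unfold phi11; nlinarith
  · have hn : 0 < ‖y.1‖ := norm_pos_iff.mpr h1
    have : 0 < ‖y.1‖ ^ 4 := pow_pos hn 4
    have : (0:ℝ) ≤ 4 * y.2 ^ 2 := by positivity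
    unfold phi11; nlinarith

lemma hasFDerivAt_phi11 (y : EuclideanSpace ℝ (Fin m) × ℝ) :
    HasFDerivAt (phi11 (m := m)) (Dphi11 y) y := by
  have hfst : HasFDerivAt (Prod.fst : EuclideanSpace ℝ (Fin m) × ℝ → _)
      (ContinuousLinearMap.fst ℝ (EuclideanSpace ℝ (Fin m)) ℝ) y := hasFDerivAt_fst
  have hsnd : HasFDerivAt (Prod.snd : EuclideanSpace ℝ (Fin m) × ℝ → _)
      (ContinuousLinearMap.snd ℝ (EuclideanSpace ℝ (Fin m)) ℝ) y := hasFDerivAt_snd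
  have h1 : HasFDerivAt (fun z : EuclideanSpace ℝ (Fin m) × ℝ => ⟪z.1, z.1⟫)
      ((fderivInnerCLM ℝ (y.1, y.1)).comp
        ((ContinuousLinearMap.fst ℝ (EuclideanSpace ℝ (Fin m)) ℝ).prod
          (ContinuousLinearMap.fst ℝ (EuclideanSpace ℝ (Fin m)) ℝ))) y :=
    hfst.inner ℝ hfst
  have h2 := (h1.mul h1).add ((hsnd.mul hsnd).const_mul 4)
  have hfun : (phi11 (m := m))
      = fun z : EuclideanSpace ℝ (Fin m) × ℝ => ⟪z.1, z.1⟫ * ⟪z.1, z.1⟫ + 4 * (z.2 * z.2) := by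
    funext z
    simp only [phi11, real_inner_self_eq_norm_sq]
    ring
  rw [hfun]
  refine h2.congr_fderiv ?_
  ext w
  · simp only [Dphi11, ContinuousLinearMap.add_apply, ContinuousLinearMap.smul_apply,
      ContinuousLinearMap.coe_comp', Function.comp_apply, ContinuousLinearMap.coe_fst',
      ContinuousLinearMap.coe_snd', ContinuousLinearMap.inl_apply, innerSL_apply_apply,
      fderivInnerCLM_apply, ContinuousLinearMap.prod_apply, smul_eq_mul,
      ContinuousLinearMap.coe_smul', Pi.smul_apply, nsmul_eq_mul, Nat.cast_ofNat]
    rw [real_inner_comm w y.1, real_inner_self_eq_norm_sq]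
    ring
  · simp only [Dphi11, ContinuousLinearMap.add_apply, ContinuousLinearMap.smul_apply,
      ContinuousLinearMap.coe_comp', Function.comp_apply, ContinuousLinearMap.coe_fst',
      ContinuousLinearMap.coe_snd', ContinuousLinearMap.inr_apply, innerSL_apply_apply,
      fderivInnerCLM_apply, ContinuousLinearMap.prod_apply, smul_eq_mul,
      ContinuousLinearMap.coe_smul', Pi.smul_apply, nsmul_eq_mul, Nat.cast_ofNat,
      inner_zero_right, inner_zero_left]
    ring

lemma hasFDerivAt_U11 (U : EuclideanSpace ℝ (Fin m) × ℝ → ℝ)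
    (hU : ∀ x : EuclideanSpace ℝ (Fin m) × ℝ,
      U x = (‖x.1‖ ^ 4 + 4 * x.2 ^ 2) ^ ((1:ℝ)/4))
    {y : EuclideanSpace ℝ (Fin m) × ℝ} (hy : y ≠ 0) :
    HasFDerivAt U ((((1:ℝ)/4 * phi11 y ^ ((1:ℝ)/4 - 1))) • Dphi11 y) y := by
  have hfun : U = fun z : EuclideanSpace ℝ (Fin m) × ℝ => phi11 z ^ ((1:ℝ)/4) := by
    funext z; exact hU z
  rw [hfun]
  exact (hasFDerivAt_phi11 y).rpow_const (Or.inl (phi11_pos hy).ne')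

lemma gradH_eq11 (U : EuclideanSpace ℝ (Fin m) × ℝ → ℝ)
    (hU : ∀ x : EuclideanSpace ℝ (Fin m) × ℝ,
      U x = (‖x.1‖ ^ 4 + 4 * x.2 ^ 2) ^ ((1:ℝ)/4))
    {y : EuclideanSpace ℝ (Fin m) × ℝ} (hy : y ≠ 0) :
    gradH U y = (‖y.1‖ ^ 2 * phi11 y ^ ((1:ℝ)/4 - 1)) • y.1 := by
  have hf := (hasFDerivAt_U11 U hU hy).fderiv
  ext i
  show fderiv ℝ U y (EuclideanSpace.single i 1, 0)
      = ((‖y.1‖ ^ 2 * phi11 y ^ ((1:ℝ)/4 - 1)) • y.1) i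
  rw [hf]
  simp only [ContinuousLinearMap.coe_smul', Pi.smul_apply, smul_eq_mul, Dphi11_apply,
    PiLp.smul_apply]
  rw [EuclideanSpace.inner_single_right]
  simp only [RCLike.star_def, conj_trivial, smul_eq_mul]
  ring

lemma gradV_eq11 (U : EuclideanSpace ℝ (Fin m) × ℝ → ℝ)
    (hU : ∀ x : EuclideanSpace ℝ (Fin m) × ℝ,
      U x = (‖x.1‖ ^ 4 + 4 * x.2 ^ 2) ^ ((1:ℝ)/4))
    {y : EuclideanSpace ℝ (Fin m) × ℝ} (hy : y ≠ 0) :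
    gradV U y = 2 * y.2 * phi11 y ^ ((1:ℝ)/4 - 1) := by
  have hf := (hasFDerivAt_U11 U hU hy).fderiv
  show fderiv ℝ U y (0, 1) = _
  rw [hf]
  simp only [ContinuousLinearMap.coe_smul', Pi.smul_apply, smul_eq_mul, Dphi11_apply,
    inner_zero_right]
  ring

lemma inner_facts11 (B : EuclideanSpace ℝ (Fin m) →L[ℝ] EuclideanSpace ℝ (Fin m))
    (hskew : ∀ v w : EuclideanSpace ℝ (Fin m), ⟪B v, w⟫ = -⟪v, B w⟫)
    (hB2 : ∀ v, B (B v) = -v) (v : EuclideanSpace ℝ (Fin m)) :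
    ⟪v, B v⟫ = 0 ∧ ⟪B v, v⟫ = 0 ∧ ⟪B v, B v⟫ = ‖v‖ ^ 2 := by
  have h1 : ⟪B v, v⟫ = -⟪v, B v⟫ := hskew v v
  have h2 : ⟪B v, v⟫ = ⟪v, B v⟫ := real_inner_comm _ _
  have h3 : ⟪v, B v⟫ = 0 := by linarith
  have h4 : ⟪B v, B v⟫ = ‖v‖ ^ 2 := by
    have := hskew v (B v)
    rw [hB2 v, inner_neg_right] at this
    rw [this, neg_neg, real_inner_self_eq_norm_sq]
  exact ⟨h3, by linarith, h4⟩

lemma G_eq11 (B : EuclideanSpace ℝ (Fin m) →L[ℝ] EuclideanSpace ℝ (Fin m))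
    (hskew : ∀ v w : EuclideanSpace ℝ (Fin m), ⟪B v, w⟫ = -⟪v, B w⟫)
    (hB2 : ∀ v, B (B v) = -v)
    (U : EuclideanSpace ℝ (Fin m) × ℝ → ℝ)
    (hU : ∀ x : EuclideanSpace ℝ (Fin m) × ℝ,
      U x = (‖x.1‖ ^ 4 + 4 * x.2 ^ 2) ^ ((1:ℝ)/4))
    (G : EuclideanSpace ℝ (Fin m) × ℝ → ℝ)
    (hG : ∀ x, G x = ‖gradH U x + gradV U x • B x.1‖ ^ 2)
    {y : EuclideanSpace ℝ (Fin m) × ℝ} (hy : y ≠ 0) :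
    G y = ⟪y.1, y.1⟫ * phi11 y ^ (-(1:ℝ)/2) := by
  obtain ⟨hvB, hBv, hBB⟩ := inner_facts11 B hskew hB2 y.1
  have hp := phi11_pos hy
  rw [hG y, gradH_eq11 U hU hy, gradV_eq11 U hU hy]
  set c := phi11 y ^ ((1:ℝ)/4 - 1) with hc
  set a := ‖y.1‖ ^ 2 * c with ha
  set b := 2 * y.2 * c with hb
  have hmap : b • B y.1 = B (b • y.1) := (map_smul B b y.1).symm
  have hexp : ‖a • y.1 + b • B y.1‖ ^ 2
      = a ^ 2 * ‖y.1‖ ^ 2 + 2 * (a * b * ⟪y.1, B y.1⟫) + b ^ 2 * ‖y.1‖ ^ 2 := by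
    rw [norm_add_sq_real]
    rw [real_inner_smul_left, real_inner_smul_right]
    rw [norm_smul, norm_smul, mul_pow, mul_pow, Real.norm_eq_abs, Real.norm_eq_abs,
      sq_abs, sq_abs]
    have hBn : ‖B y.1‖ ^ 2 = ‖y.1‖ ^ 2 := by
      rw [← real_inner_self_eq_norm_sq, hBB]
    rw [hBn]
    ring
  rw [hexp, hvB]
  have hkey : c * c * phi11 y = phi11 y ^ (-(1:ℝ)/2) := by
    have : phi11 y ^ (-(1:ℝ)/2)
        = phi11 y ^ ((1:ℝ)/4 - 1) * (phi11 y ^ ((1:ℝ)/4 - 1) * phi11 y ^ (1:ℝ)) := by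
      rw [← Real.rpow_add hp, ← Real.rpow_add hp]; norm_num
    rw [this, Real.rpow_one, hc]; ring
  rw [real_inner_self_eq_norm_sq]
  have hphi : phi11 y = ‖y.1‖ ^ 4 + 4 * y.2 ^ 2 := rfl
  rw [ha, hb]
  linear_combination (‖y.1‖ ^ 2) * hkey - (‖y.1‖ ^ 2 * c * c) * hphi

end Aux11


/-- the gauge function `U` is a classical solution on `ℝ^{m+1} \ {0}`
of the Aronsson equation for `H²(x,p) = |σ(x)ᵀp|²`, where `σ(x) = [I_m ; (Bx_h)ᵀ]`:
writing `q(x) = σ(x)ᵀ∇U(x) = ∇_hU(x) + ∂_vU(x) • Bx_h` and `G(x) = |q(x)|²`, the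
directional derivative of `G` along `(H²)_p(x,∇U(x)) = 2σ(x)σ(x)ᵀ∇U(x) =
(2q(x), 2⟪Bx_h, q(x)⟫)` vanishes. -/
theorem stmt_11 {m : ℕ} (hm : 2 ≤ m)
    (B : EuclideanSpace ℝ (Fin m) →L[ℝ] EuclideanSpace ℝ (Fin m))
    (hskew : ∀ v w : EuclideanSpace ℝ (Fin m), ⟪B v, w⟫ = -⟪v, B w⟫)
    (hB2 : ∀ v, B (B v) = -v)
    (U : EuclideanSpace ℝ (Fin m) × ℝ → ℝ)
    (hU : ∀ x : EuclideanSpace ℝ (Fin m) × ℝ,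
      U x = (‖x.1‖ ^ 4 + 4 * x.2 ^ 2) ^ ((1:ℝ)/4))
    (G : EuclideanSpace ℝ (Fin m) × ℝ → ℝ)
    (hG : ∀ x, G x = ‖gradH U x + gradV U x • B x.1‖ ^ 2) :
    ∀ x : EuclideanSpace ℝ (Fin m) × ℝ, x ≠ 0 →
      DifferentiableAt ℝ U x ∧
      ∃ DG : EuclideanSpace ℝ (Fin m) × ℝ →L[ℝ] ℝ,
        HasFDerivAt G DG x ∧
        DG ((2:ℝ) • (gradH U x + gradV U x • B x.1),
            2 * ⟪B x.1, gradH U x + gradV U x • B x.1⟫) = 0 := by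
  intro x hx
  refine ⟨(hasFDerivAt_U11 U hU hx).differentiableAt, ?_⟩
  have hp := phi11_pos hx
  obtain ⟨hvB, hBv, hBB⟩ := inner_facts11 B hskew hB2 x.1
  -- derivative of the closed form of G
  have hfst : HasFDerivAt (Prod.fst : EuclideanSpace ℝ (Fin m) × ℝ → _)
      (ContinuousLinearMap.fst ℝ (EuclideanSpace ℝ (Fin m)) ℝ) x := hasFDerivAt_fst
  have h1 : HasFDerivAt (fun z : EuclideanSpace ℝ (Fin m) × ℝ => ⟪z.1, z.1⟫)
      ((fderivInnerCLM ℝ (x.1, x.1)).comp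
        ((ContinuousLinearMap.fst ℝ (EuclideanSpace ℝ (Fin m)) ℝ).prod
          (ContinuousLinearMap.fst ℝ (EuclideanSpace ℝ (Fin m)) ℝ))) x :=
    hfst.inner ℝ hfst
  have h2 : HasFDerivAt (fun z : EuclideanSpace ℝ (Fin m) × ℝ => phi11 z ^ (-(1:ℝ)/2))
      ((((-(1:ℝ)/2) * phi11 x ^ ((-(1:ℝ)/2) - 1)) • Dphi11 x)) x :=
    (hasFDerivAt_phi11 x).rpow_const (Or.inl hp.ne')
  have hD := h1.mul h2
  have hev : G =ᶠ[nhds x]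
      (fun z : EuclideanSpace ℝ (Fin m) × ℝ => ⟪z.1, z.1⟫ * phi11 z ^ (-(1:ℝ)/2)) :=
    (eventually_ne_nhds hx).mono fun y hy => G_eq11 B hskew hB2 U hU G hG hy
  refine ⟨_, hD.congr_of_eventuallyEq hev, ?_⟩
  rw [gradH_eq11 U hU hx, gradV_eq11 U hU hx]
  set c := phi11 x ^ ((1:ℝ)/4 - 1) with hc
  set q : EuclideanSpace ℝ (Fin m) :=
    (‖x.1‖ ^ 2 * c) • x.1 + (2 * x.2 * c) • B x.1 with hq
  have hxq : ⟪x.1, q⟫ = c * ‖x.1‖ ^ 4 := by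
    rw [hq, inner_add_right, real_inner_smul_right, real_inner_smul_right, hvB,
      real_inner_self_eq_norm_sq]
    ring
  have hBq : ⟪B x.1, q⟫ = 2 * x.2 * c * ‖x.1‖ ^ 2 := by
    rw [hq, inner_add_right, real_inner_smul_right, real_inner_smul_right, hBv, hBB]
    ring
  simp only [ContinuousLinearMap.add_apply, ContinuousLinearMap.smul_apply,
    ContinuousLinearMap.coe_comp', Function.comp_apply, ContinuousLinearMap.prod_apply,
    ContinuousLinearMap.coe_fst', fderivInnerCLM_apply, Dphi11_apply, smul_eq_mul]
  have hqx : ⟪q, x.1⟫ = c * ‖x.1‖ ^ 4 := by rw [real_inner_comm]; exact hxq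
  rw [real_inner_smul_right x.1 q 2, real_inner_smul_left q x.1 2, hqx, hxq, hBq]
  have hkey : phi11 x ^ ((-(1:ℝ)/2) - 1) * phi11 x = phi11 x ^ (-(1:ℝ)/2) := by
    rw [Real.rpow_sub_one hp.ne']
    field_simp
  have hphi : phi11 x = ‖x.1‖ ^ 4 + 4 * x.2 ^ 2 := rfl
  rw [real_inner_self_eq_norm_sq]
  linear_combination (-4 * ‖x.1‖ ^ 4 * c) * hkey
    + (4 * ‖x.1‖ ^ 4 * c * phi11 x ^ ((-(1:ℝ)/2) - 1)) * hphi
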